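/- Let n ∈ ℕ and λ ∈ (−n, 0). Then GaRo_{∞,λ}(Q₀) = 𝓛̇^{1,λ}(Q₀) with equivalent norms: there exist constants c₁, c₂ > 0 (depending only on n) such that c₁ ‖f‖_{𝓛̇^{1,λ}} ≤ ‖f‖_{GaRo_{∞,λ}} ≤ c₂ ‖f‖_{𝓛̇^{1,λ}} for all f ∈ L¹(Q₀). Moreover, for λ = 0 one has GaRo_{∞,0}(Q₀) = BMO(Q₀) with equivalent (semi)norms. -/

import Mathlib

open MeasureTheory ENNReal NNReal Set Filter

noncomputable section

/-- An axis-parallel cube in `ℝⁿ` (modeled as `Fin n → ℝ`), given by its lower-left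
corner and (positive) side length. -/
structure Cube (n : ℕ) where
  corner : Fin n → ℝ
  side : ℝ
  side_pos : 0 < side

namespace Cube

/-- The underlying set of a cube. -/
def set {n : ℕ} (Q : Cube n) : Set (Fin n → ℝ) :=
  Set.Icc Q.corner fun i => Q.corner i + Q.side

/-- The volume `|Q|` of a cube, as an extended nonnegative real. -/
def vol {n : ℕ} (Q : Cube n) : ℝ≥0∞ :=
  volume Q.set

end Cube

variable {n : ℕ}

/-- The mean value `f_Q = (1/|Q|) ∫_Q f`. -/
def cubeAvg (f : (Fin n → ℝ) → ℝ) (Q : Cube n) : ℝ :=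
  (∫ x in Q.set, f x) / (volume Q.set).toReal

/-- `(1/|Q|) ∫_Q ∫_Q |f x - f y| dx dy`, as an extended nonnegative real. -/
def dblOsc (f : (Fin n → ℝ) → ℝ) (Q : Cube n) : ℝ≥0∞ :=
  (∫⁻ x in Q.set, ∫⁻ y in Q.set, ENNReal.ofReal |f x - f y|) / Q.vol

/-- `(1/|Q|) ∫_Q |f - f_Q|`, as an extended nonnegative real. -/
def oscAvg (f : (Fin n → ℝ) → ℝ) (Q : Cube n) : ℝ≥0∞ :=
  (∫⁻ x in Q.set, ENNReal.ofReal |f x - cubeAvg f Q|) / Q.vol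

/-- A packing of `Q₀`: a countable family of subcubes of `Q₀` with pairwise
disjoint interiors. -/
def IsPacking (Q₀ : Cube n) (π : Set (Cube n)) : Prop :=
  π.Countable ∧ (∀ Q ∈ π, Q.set ⊆ Q₀.set) ∧
    π.Pairwise fun Q Q' => Disjoint (interior Q.set) (interior Q'.set)

/-- `γ ∈ Γ_f`: `γ` is integrable on `Q₀` and for every packing `{Qᵢ}` of `Q₀`,
`Σᵢ (1/|Qᵢ|) ∫_{Qᵢ}∫_{Qᵢ} |f x - f y| ≤ Σᵢ ∫_{Qᵢ} γ`. -/
def MemGamma (Q₀ : Cube n) (f γ : (Fin n → ℝ) → ℝ) : Prop :=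
  IntegrableOn γ Q₀.set volume ∧
    ∀ π : Set (Cube n), IsPacking Q₀ π →
      ∑' Q : π, dblOsc f (Q : Cube n) ≤
        ∑' Q : π, ENNReal.ofReal (∫ x in (Q : Cube n).set, γ x)

/-- The subcubes of `Q₀` containing the point `x`. -/
def subcubesAt (Q₀ : Cube n) (x : Fin n → ℝ) : Set (Cube n) :=
  {Q | Q.set ⊆ Q₀.set ∧ x ∈ Q.set}

/-- The sharp maximal function `f^#_{Q₀}(x) = sup_{Q₀ ⊇ Q ∋ x} (1/|Q|) ∫_Q |f - f_Q|`. -/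
def sharpMax (Q₀ : Cube n) (f : (Fin n → ℝ) → ℝ) (x : Fin n → ℝ) : ℝ≥0∞ :=
  ⨆ Q ∈ subcubesAt Q₀ x, oscAvg f Q

/-- Hardy–Littlewood maximal function of an `ℝ≥0∞`-valued function. -/
def hlMaxE (Q₀ : Cube n) (g : (Fin n → ℝ) → ℝ≥0∞) (x : Fin n → ℝ) : ℝ≥0∞ :=
  ⨆ Q ∈ subcubesAt Q₀ x, (∫⁻ y in Q.set, g y) / Q.vol

/-- Hardy–Littlewood maximal function `M_{Q₀} g (x) = sup_{Q₀ ⊇ Q ∋ x} (1/|Q|) ∫_Q |g|`. -/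
def hlMax (Q₀ : Cube n) (g : (Fin n → ℝ) → ℝ) (x : Fin n → ℝ) : ℝ≥0∞ :=
  hlMaxE Q₀ (fun y => ENNReal.ofReal |g y|) x

/-- `inf_{c ∈ ℝ} inf {α ≥ 0 : |{y ∈ Q : |f y - c| > α}| < s |Q|}`. -/
def oscS (s : ℝ) (f : (Fin n → ℝ) → ℝ) (Q : Cube n) : ℝ≥0∞ :=
  ⨅ c : ℝ,
    sInf {a : ℝ≥0∞ | volume {y ∈ Q.set | a < ENNReal.ofReal |f y - c|} < ENNReal.ofReal s * Q.vol}

/-- The Strömberg–Jawerth–Torchinsky local maximal function `M^#_{s,Q₀} f`. -/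
def locSharpMax (s : ℝ) (Q₀ : Cube n) (f : (Fin n → ℝ) → ℝ) (x : Fin n → ℝ) : ℝ≥0∞ :=
  ⨆ Q ∈ subcubesAt Q₀ x, oscS s f Q

/-- The decreasing rearrangement (on `(0,1)`, extended-real-valued) of an
`ℝ≥0∞`-valued function on `Q₀`. -/
def rearr (Q₀ : Cube n) (g : (Fin n → ℝ) → ℝ≥0∞) (t : ℝ) : ℝ≥0∞ :=
  sInf {a : ℝ≥0∞ | volume {x ∈ Q₀.set | a < g x} ≤ ENNReal.ofReal t}

/-- The decreasing rearrangement `f*` of a real function on `Q₀`. -/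
def rearrF (Q₀ : Cube n) (f : (Fin n → ℝ) → ℝ) : ℝ → ℝ≥0∞ :=
  rearr Q₀ fun x => ENNReal.ofReal |f x|

/-- A rearrangement invariant (Banach function) space, described through its
representation space on `(0,1)`: an extended-real-valued function norm `N` on
(`ℝ≥0∞`-valued) functions on `(0,1)` which is rearrangement invariant, has the
Fatou property, contains `L^∞(0,1)` and embeds into `L¹(0,1)`. -/
structure RISpace where
  N : (ℝ → ℝ≥0∞) → ℝ≥0∞
  add_le : ∀ f g : ℝ → ℝ≥0∞, Measurable f → Measurable g → N (f + g) ≤ N f + N g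
  smul_eq : ∀ (c : ℝ≥0) (f : ℝ → ℝ≥0∞), N (fun t => (c : ℝ≥0∞) * f t) = (c : ℝ≥0∞) * N f
  mono : ∀ f g : ℝ → ℝ≥0∞, (∀ᵐ t ∂volume.restrict (Set.Ioo (0:ℝ) 1), f t ≤ g t) → N f ≤ N g
  rearr_inv : ∀ f g : ℝ → ℝ≥0∞, Measurable f → Measurable g →
    (∀ a : ℝ≥0∞, volume {t ∈ Set.Ioo (0:ℝ) 1 | a < f t} = volume {t ∈ Set.Ioo (0:ℝ) 1 | a < g t}) →
    N f = N g
  eq_zero_iff : ∀ f : ℝ → ℝ≥0∞, Measurable f →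
    (N f = 0 ↔ f =ᵐ[volume.restrict (Set.Ioo (0:ℝ) 1)] 0)
  fatou : ∀ f : ℕ → ℝ → ℝ≥0∞, (∀ k, Measurable (f k)) → Monotone f →
    N (fun t => ⨆ k, f k t) = ⨆ k, N (f k)
  indicator_lt_top : N ((Set.Ioo (0:ℝ) 1).indicator fun _ => 1) < ⊤
  le_L1 : ∃ C : ℝ≥0∞, C ≠ ⊤ ∧ ∀ f : ℝ → ℝ≥0∞, Measurable f →
    (∫⁻ t in Set.Ioo (0:ℝ) 1, f t) ≤ C * N f

/-- The norm in `X` of an `ℝ≥0∞`-valued function on `Q₀`, computed through the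
representation space: `‖g‖_X = ‖g*‖_{X̄}`. -/
def RISpace.normE (X : RISpace) (Q₀ : Cube n) (g : (Fin n → ℝ) → ℝ≥0∞) : ℝ≥0∞ :=
  X.N (rearr Q₀ g)

/-- The norm `‖f‖_X = ‖f*‖_{X̄}` of a real function on `Q₀`. -/
def RISpace.normF (X : RISpace) (Q₀ : Cube n) (f : (Fin n → ℝ) → ℝ) : ℝ≥0∞ :=
  X.N (rearrF Q₀ f)

/-- The Garsia–Rodemich functional `‖f‖_{GaRo_X} = inf {‖γ‖_X : γ ∈ Γ_f}`. -/
def GaRoNorm (X : RISpace) (Q₀ : Cube n) (f : (Fin n → ℝ) → ℝ) : ℝ≥0∞ :=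
  ⨅ γ ∈ {γ | MemGamma Q₀ f γ}, X.normF Q₀ γ

/-- `f ∈ GaRo_X`: `f ∈ L¹(Q₀)` and `Γ_f ∩ X ≠ ∅`. -/
def MemGaRo (X : RISpace) (Q₀ : Cube n) (f : (Fin n → ℝ) → ℝ) : Prop :=
  IntegrableOn f Q₀.set volume ∧ ∃ γ, MemGamma Q₀ f γ ∧ X.normF Q₀ γ < ⊤

/-- `f ∈ X`. -/
def MemX (X : RISpace) (Q₀ : Cube n) (f : (Fin n → ℝ) → ℝ) : Prop :=
  IntegrableOn f Q₀.set volume ∧ X.normF Q₀ f < ⊤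

/-- Decreasing rearrangement on `(0,1)` of an `ℝ≥0∞`-valued function on `(0,1)`. -/
def rearrI (g : ℝ → ℝ≥0∞) (t : ℝ) : ℝ≥0∞ :=
  sInf {a : ℝ≥0∞ | volume {u ∈ Set.Ioo (0:ℝ) 1 | a < g u} ≤ ENNReal.ofReal t}

/-- The dilation operator `σ_s g (t) = g*(t/s)` for `0 < t < min s 1`, `0` otherwise. -/
def dil (s : ℝ) (g : ℝ → ℝ≥0∞) (t : ℝ) : ℝ≥0∞ :=
  if 0 < t ∧ t < min s 1 then rearrI g (t / s) else 0

/-- The operator norm `‖σ_s‖_{X̄ → X̄}`. -/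
def RISpace.dilNorm (X : RISpace) (s : ℝ) : ℝ≥0∞ :=
  ⨆ g ∈ {g : ℝ → ℝ≥0∞ | Measurable g ∧ X.N g ≤ 1}, X.N (dil s g)

/-- The lower Boyd index `α_X = lim_{s → 0+} log ‖σ_s‖ / log s`. -/
def RISpace.boydLower (X : RISpace) : ℝ :=
  limUnder (nhdsWithin (0:ℝ) (Set.Ioi 0)) fun s : ℝ =>
    Real.log (X.dilNorm s).toReal / Real.log s

/-- The upper Boyd index `β_X = lim_{s → ∞} log ‖σ_s‖ / log s`. -/
def RISpace.boydUpper (X : RISpace) : ℝ :=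
  limUnder atTop fun s : ℝ => Real.log (X.dilNorm s).toReal / Real.log s

/-- The fundamental function `φ_X(s) = ‖χ_{(0,s)}‖_{X̄}`. -/
def RISpace.fund (X : RISpace) (s : ℝ) : ℝ≥0∞ :=
  X.N ((Set.Ioo (0:ℝ) s).indicator fun _ => 1)

/-- `X` is of fundamental type: `‖σ_t‖ ≤ C sup_{s > 0, st ≤ 1} φ_X(st)/φ_X(s)`. -/
def RISpace.FundamentalType (X : RISpace) : Prop :=
  ∃ C : ℝ≥0∞, C ≠ ⊤ ∧ ∀ t : ℝ, 0 < t →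
    X.dilNorm t ≤ C * ⨆ s ∈ {s : ℝ | 0 < s ∧ s * t ≤ 1}, X.fund (s * t) / X.fund s

/-- The `BMO(Q₀)` seminorm `sup_{Q ⊆ Q₀} (1/|Q|) ∫_Q |f - f_Q|`. -/
def bmoNormE (Q₀ : Cube n) (f : (Fin n → ℝ) → ℝ) : ℝ≥0∞ :=
  ⨆ Q ∈ {Q : Cube n | Q.set ⊆ Q₀.set}, oscAvg f Q

/-- The `L¹(Q₀)` norm, extended-real-valued. -/
def L1normE (Q₀ : Cube n) (f : (Fin n → ℝ) → ℝ) : ℝ≥0∞ :=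
  ∫⁻ x in Q₀.set, ENNReal.ofReal |f x|

/-- The Peetre K-functional for the couple `(L¹(Q₀), BMO(Q₀))` (modulo constants). -/
def KL1BMO (Q₀ : Cube n) (t : ℝ) (f : (Fin n → ℝ) → ℝ) : ℝ≥0∞ :=
  ⨅ g : (Fin n → ℝ) → ℝ,
    (L1normE Q₀ fun x => f x - g x) + ENNReal.ofReal t * bmoNormE Q₀ g

/-- The unit cube `[0,1] ⊆ ℝ¹`, used to model the interval `(0,1)`. -/
def unitCube : Cube 1 := ⟨fun _ => 0, 1, one_pos⟩

/-- The John–Nirenberg functional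
`‖f‖_{JN_p} = sup_π (Σᵢ |Qᵢ| ((1/|Qᵢ|) ∫_{Qᵢ} |f - f_{Qᵢ}|)^p)^{1/p}`. -/
def JNnorm (Q₀ : Cube n) (p : ℝ) (f : (Fin n → ℝ) → ℝ) : ℝ≥0∞ :=
  ⨆ π ∈ {π : Set (Cube n) | IsPacking Q₀ π},
    (∑' Q : π, (Q : Cube n).vol * oscAvg f (Q : Cube n) ^ p) ^ (1 / p)

/-- `γ ∈ Γ'_f`: `γ ∈ L¹(Q₀)` and `f^#_{Q₀} ≤ M_{Q₀} γ` on `Q₀`. -/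
def MemGammaP (Q₀ : Cube n) (f γ : (Fin n → ℝ) → ℝ) : Prop :=
  IntegrableOn γ Q₀.set volume ∧ ∀ x ∈ Q₀.set, sharpMax Q₀ f x ≤ hlMax Q₀ γ x

/-- `S_{π,#}(f) = Σ_{Q ∈ π} ((1/|Q|) ∫_Q |f - f_Q|) χ_Q`. -/
def packFn (π : Set (Cube n)) (f : (Fin n → ℝ) → ℝ) (x : Fin n → ℝ) : ℝ≥0∞ :=
  ∑' Q : π, (Q : Cube n).set.indicator (fun _ => oscAvg f (Q : Cube n)) x

/-- `F_{f,#}(t) = sup_{π packing} (S_{π,#}(f))*(t)`. -/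
def Fsharp (Q₀ : Cube n) (f : (Fin n → ℝ) → ℝ) (t : ℝ) : ℝ≥0∞ :=
  ⨆ π ∈ {π : Set (Cube n) | IsPacking Q₀ π}, rearr Q₀ (packFn π f) t

/-- The `GaRo_{∞,λ}` functional: the least constant `C` such that, for every packing,
`Σᵢ (1/|Qᵢ|) ∫∫ |f x - f y| ≤ C Σᵢ |Qᵢ|^{1+λ/n}`. -/
def GaRoLamNorm (Q₀ : Cube n) (lam : ℝ) (f : (Fin n → ℝ) → ℝ) : ℝ≥0∞ :=
  sInf {C : ℝ≥0∞ | ∀ π : Set (Cube n), IsPacking Q₀ π →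
    ∑' Q : π, dblOsc f (Q : Cube n) ≤ C * ∑' Q : π, (Q : Cube n).vol ^ (1 + lam / (n : ℝ))}

/-- The homogeneous Campanato seminorm
`‖f‖_{𝓛̇^{1,λ}} = sup_{Q ⊆ Q₀} |Q|^{-λ/n} (1/|Q|) ∫_Q |f - f_Q|`. -/
def campNorm (Q₀ : Cube n) (lam : ℝ) (f : (Fin n → ℝ) → ℝ) : ℝ≥0∞ :=
  ⨆ Q ∈ {Q : Cube n | Q.set ⊆ Q₀.set}, Q.vol ^ (-(lam / (n : ℝ))) * oscAvg f Q

/-- The Gagliardo (fractional Sobolev) seminorm `‖f‖_{W^{α,p}}` on `Q₀`. -/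
def sobNorm (Q₀ : Cube n) (a p : ℝ) (f : (Fin n → ℝ) → ℝ) : ℝ≥0∞ :=
  (∫⁻ x in Q₀.set, ∫⁻ y in Q₀.set,
      ENNReal.ofReal
        (|f x - f y| ^ p / Real.sqrt (∑ i, (x i - y i) ^ 2) ^ ((n : ℝ) + a * p))) ^ (1 / p)



-- ===== Auxiliary lemmas =====

lemma cube_vol_pos {n : ℕ} (Q : Cube n) : 0 < Q.vol := by
  rw [Cube.vol, Cube.set, Real.volume_Icc_pi]
  rw [CanonicallyOrderedAdd.prod_pos]
  intro i _
  simp [Q.side_pos]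

lemma cube_vol_ne_top {n : ℕ} (Q : Cube n) : Q.vol ≠ ⊤ := by
  rw [Cube.vol, Cube.set, Real.volume_Icc_pi]
  exact (ENNReal.prod_lt_top fun i _ => ENNReal.ofReal_lt_top).ne

/-- Pointwise: `|Q| * |f x - f_Q| ≤ ∫_Q |f x - f y| dy`. -/
lemma pointwise_avg {n : ℕ} (Q : Cube n) (f : (Fin n → ℝ) → ℝ)
    (hf : IntegrableOn f Q.set volume) (x : Fin n → ℝ) :
    Q.vol * ENNReal.ofReal |f x - cubeAvg f Q| ≤
      ∫⁻ y in Q.set, ENNReal.ofReal |f x - f y| := by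
  set v : ℝ := (volume Q.set).toReal with hv_def
  have hvolQ : Q.vol = volume Q.set := rfl
  have hv0 : 0 < v := ENNReal.toReal_pos (by rw [← hvolQ]; exact (cube_vol_pos Q).ne')
    (by rw [← hvolQ]; exact cube_vol_ne_top Q)
  have hconst : IntegrableOn (fun _ => f x) Q.set volume := by
    exact integrableOn_const (C := f x) (by rw [← hvolQ]; exact cube_vol_ne_top Q)
  have habs : IntegrableOn (fun y => |f x - f y|) Q.set volume := (hconst.sub hf).abs
  have h2 : ∫ y in Q.set, (f x - f y) = v * f x - ∫ y in Q.set, f y := by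
    rw [integral_sub hconst hf, setIntegral_const, smul_eq_mul, hv_def, measureReal_def]
  have h1 : |f x - cubeAvg f Q| * v = |∫ y in Q.set, (f x - f y)| := by
    have hmul : (f x - cubeAvg f Q) * v = ∫ y in Q.set, (f x - f y) := by
      rw [h2, cubeAvg, ← hv_def]
      field_simp
    calc |f x - cubeAvg f Q| * v = |f x - cubeAvg f Q| * |v| := by rw [abs_of_pos hv0]
      _ = |(f x - cubeAvg f Q) * v| := (abs_mul _ _).symm
      _ = |∫ y in Q.set, (f x - f y)| := by rw [hmul]
  have h3 : |∫ y in Q.set, (f x - f y)| ≤ ∫ y in Q.set, |f x - f y| := by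
    simpa [Real.norm_eq_abs] using
      norm_integral_le_integral_norm (μ := volume.restrict Q.set) fun y => f x - f y
  have h4 : ENNReal.ofReal (∫ y in Q.set, |f x - f y|) =
      ∫⁻ y in Q.set, ENNReal.ofReal |f x - f y| :=
    ofReal_integral_eq_lintegral_ofReal habs (Filter.Eventually.of_forall fun y => abs_nonneg _)
  have h5 : Q.vol * ENNReal.ofReal |f x - cubeAvg f Q| =
      ENNReal.ofReal (|f x - cubeAvg f Q| * v) := by
    rw [ENNReal.ofReal_mul (abs_nonneg _), mul_comm, hvolQ, hv_def,
      ENNReal.ofReal_toReal (by rw [← hvolQ]; exact cube_vol_ne_top Q)]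
  rw [h5, h1]
  exact le_trans (ENNReal.ofReal_le_ofReal h3) (le_of_eq h4)

/-- `|Q| * oscAvg ≤ dblOsc` in integrated form. -/
lemma vol_mul_osc_le {n : ℕ} (Q : Cube n) (f : (Fin n → ℝ) → ℝ)
    (hf : IntegrableOn f Q.set volume) :
    oscAvg f Q ≤ dblOsc f Q / Q.vol := by
  have hv0 : Q.vol ≠ 0 := (cube_vol_pos Q).ne'
  have hvt : Q.vol ≠ ⊤ := cube_vol_ne_top Q
  set A : ℝ≥0∞ := ∫⁻ x in Q.set, ENNReal.ofReal |f x - cubeAvg f Q| with hA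
  set B : ℝ≥0∞ := ∫⁻ x in Q.set, ∫⁻ y in Q.set, ENNReal.ofReal |f x - f y| with hB
  have hAB : Q.vol * A ≤ B := by
    rw [hA, ← lintegral_const_mul' _ _ hvt]
    exact lintegral_mono fun x => pointwise_avg Q f hf x
  have hA_le : A ≤ B / Q.vol := by
    rw [ENNReal.le_div_iff_mul_le (Or.inl hv0) (Or.inl hvt), mul_comm]
    exact hAB
  have : oscAvg f Q = A / Q.vol := rfl
  rw [this]
  have : dblOsc f Q = B / Q.vol := rfl
  rw [this]
  exact ENNReal.div_le_div_right hA_le _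

/-- `dblOsc ≤ 2 |Q| oscAvg`. -/
lemma dblOsc_le {n : ℕ} (Q : Cube n) (f : (Fin n → ℝ) → ℝ) :
    dblOsc f Q ≤ 2 * Q.vol * oscAvg f Q := by
  have hv0 : Q.vol ≠ 0 := (cube_vol_pos Q).ne'
  have hvt : Q.vol ≠ ⊤ := cube_vol_ne_top Q
  set c : ℝ := cubeAvg f Q with hc
  set A : ℝ≥0∞ := ∫⁻ x in Q.set, ENNReal.ofReal |f x - c| with hA
  set B : ℝ≥0∞ := ∫⁻ x in Q.set, ∫⁻ y in Q.set, ENNReal.ofReal |f x - f y| with hB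
  have hvolQ : Q.vol = volume Q.set := rfl
  have hBA : B ≤ 2 * A * Q.vol := by
    have hstep : ∀ x, (∫⁻ y in Q.set, ENNReal.ofReal |f x - f y|) ≤
        ENNReal.ofReal |f x - c| * Q.vol + A := by
      intro x
      calc (∫⁻ y in Q.set, ENNReal.ofReal |f x - f y|)
          ≤ ∫⁻ y in Q.set, (ENNReal.ofReal |f x - c| + ENNReal.ofReal |f y - c|) := by
            refine lintegral_mono fun y => ?_
            calc ENNReal.ofReal |f x - f y| ≤ ENNReal.ofReal (|f x - c| + |f y - c|) := by
                  refine ENNReal.ofReal_le_ofReal ?_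
                  have : f x - f y = (f x - c) - (f y - c) := by ring
                  rw [this]
                  exact abs_sub _ _
              _ ≤ ENNReal.ofReal |f x - c| + ENNReal.ofReal |f y - c| :=
                  ENNReal.ofReal_add_le
        _ = ENNReal.ofReal |f x - c| * Q.vol + A := by
            rw [lintegral_add_left measurable_const, setLIntegral_const, hvolQ]
    calc B ≤ ∫⁻ x in Q.set, (ENNReal.ofReal |f x - c| * Q.vol + A) :=
          lintegral_mono hstep
      _ = (∫⁻ x in Q.set, ENNReal.ofReal |f x - c| * Q.vol) + A * Q.vol := by
          rw [lintegral_add_right _ measurable_const, setLIntegral_const, hvolQ]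
      _ = A * Q.vol + A * Q.vol := by rw [lintegral_mul_const' _ _ hvt]
      _ = 2 * A * Q.vol := by ring
  have hosc : oscAvg f Q = A / Q.vol := rfl
  have hdbl : dblOsc f Q = B / Q.vol := rfl
  rw [hosc, hdbl]
  calc B / Q.vol ≤ 2 * A := ENNReal.div_le_of_le_mul hBA
    _ = 2 * Q.vol * (A / Q.vol) := by rw [mul_assoc, ENNReal.mul_div_cancel hv0 hvt]

/-- Main two-sided estimate, valid for every `lam : ℝ`. -/
lemma main_estimate {n : ℕ} (Q₀ : Cube n) (f : (Fin n → ℝ) → ℝ)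
    (hf : IntegrableOn f Q₀.set volume) (lam : ℝ) :
    campNorm Q₀ lam f ≤ GaRoLamNorm Q₀ lam f ∧
      GaRoLamNorm Q₀ lam f ≤ 2 * campNorm Q₀ lam f := by
  have hQ0meas : MeasurableSet Q₀.set := measurableSet_Icc
  set e : ℝ := -(lam / (n : ℝ)) with he
  have hexp : ∀ Q : Cube n, Q.vol ^ e * Q.vol ^ (1 + lam / (n : ℝ)) = Q.vol := by
    intro Q
    rw [← ENNReal.rpow_add _ _ (cube_vol_pos Q).ne' (cube_vol_ne_top Q)]
    rw [he]
    norm_num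
  constructor
  · -- campNorm ≤ GaRoLamNorm
    refine le_sInf fun C hC => ?_
    refine iSup₂_le fun Q hQ => ?_
    have hv0 : Q.vol ≠ 0 := (cube_vol_pos Q).ne'
    have hvt : Q.vol ≠ ⊤ := cube_vol_ne_top Q
    have hp : IsPacking Q₀ ({Q} : Set (Cube n)) := by
      refine ⟨Set.countable_singleton _, ?_, Set.pairwise_singleton _ _⟩
      rintro Q' rfl
      exact hQ
    have h := hC ({Q} : Set (Cube n)) hp
    rw [tsum_singleton Q (fun Q => dblOsc f Q),
      tsum_singleton Q (fun Q : Cube n => Q.vol ^ (1 + lam / (n : ℝ)))] at h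
    -- h : dblOsc f Q ≤ C * Q.vol ^ (1 + lam/n)
    have hosc := vol_mul_osc_le Q f (hf.mono_set hQ)
    have hr0 : Q.vol ^ (1 + lam / (n : ℝ)) ≠ 0 := by
      intro h0
      have := hexp Q
      rw [h0, mul_zero] at this
      exact hv0 this.symm
    have hrt : Q.vol ^ (1 + lam / (n : ℝ)) ≠ ⊤ := by
      intro h0
      have := hexp Q
      rw [h0, ENNReal.mul_top (by
        intro h1
        have := hexp Q
        rw [h1, zero_mul] at this
        exact hv0 this.symm)] at this
      exact hvt this.symm
    calc Q.vol ^ e * oscAvg f Q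
        ≤ Q.vol ^ e * (dblOsc f Q / Q.vol) := mul_le_mul_right hosc _
      _ ≤ Q.vol ^ e * (C * Q.vol ^ (1 + lam / (n : ℝ)) / Q.vol) :=
          mul_le_mul_right (ENNReal.div_le_div_right h _) _
      _ = C * (Q.vol ^ e * Q.vol ^ (1 + lam / (n : ℝ))) * Q.vol⁻¹ := by
          rw [div_eq_mul_inv]; ring
      _ = C := by rw [hexp Q, mul_assoc, ENNReal.mul_inv_cancel hv0 hvt, mul_one]
  · -- GaRoLamNorm ≤ 2 * campNorm
    refine sInf_le fun π hπ => ?_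
    calc (∑' Q : π, dblOsc f (Q : Cube n))
        ≤ ∑' Q : π, 2 * campNorm Q₀ lam f * (Q : Cube n).vol ^ (1 + lam / (n : ℝ)) := by
          refine ENNReal.tsum_le_tsum fun Q => ?_
          set Q' : Cube n := (Q : Cube n) with hQ'
          have hsub : Q'.set ⊆ Q₀.set := hπ.2.1 Q' Q.2
          have hcamp : Q'.vol ^ e * oscAvg f Q' ≤ campNorm Q₀ lam f :=
            le_iSup₂ (f := fun (Q : Cube n) (_ : Q ∈ {Q : Cube n | Q.set ⊆ Q₀.set}) =>
              Q.vol ^ e * oscAvg f Q) Q' hsub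
          calc dblOsc f Q' ≤ 2 * Q'.vol * oscAvg f Q' := dblOsc_le Q' f
            _ = 2 * Q'.vol ^ (1 + lam / (n : ℝ)) * (Q'.vol ^ e * oscAvg f Q') := by
                rw [show (2:ℝ≥0∞) * Q'.vol ^ (1 + lam / (n : ℝ)) * (Q'.vol ^ e * oscAvg f Q')
                    = 2 * (Q'.vol ^ e * Q'.vol ^ (1 + lam / (n : ℝ))) * oscAvg f Q' by ring,
                  hexp Q']
            _ ≤ 2 * Q'.vol ^ (1 + lam / (n : ℝ)) * campNorm Q₀ lam f :=
                mul_le_mul_right hcamp _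
            _ = 2 * campNorm Q₀ lam f * Q'.vol ^ (1 + lam / (n : ℝ)) := by ring
      _ = 2 * campNorm Q₀ lam f * ∑' Q : π, (Q : Cube n).vol ^ (1 + lam / (n : ℝ)) :=
          ENNReal.tsum_mul_left

lemma camp_zero {n : ℕ} (Q₀ : Cube n) (f : (Fin n → ℝ) → ℝ) :
    campNorm Q₀ 0 f = bmoNormE Q₀ f := by
  unfold campNorm bmoNormE
  simp [ENNReal.rpow_zero]

/-- Theorem: `GaRo_{∞,λ}` and Campanato spaces.
For `λ ∈ (-n, 0)`, `GaRo_{∞,λ}(Q₀) = 𝓛̇^{1,λ}(Q₀)` with equivalent norms (constants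
depending only on `n`), and for `λ = 0`, `GaRo_{∞,0}(Q₀) = BMO(Q₀)` with equivalent
seminorms. -/
theorem garsia_rodemich_stmt18 (n : ℕ) (hn : 0 < n) :
    ∃ c₁ c₂ : ℝ≥0∞, 0 < c₁ ∧ c₂ ≠ ⊤ ∧
      ∀ Q₀ : Cube n, volume Q₀.set = 1 →
        ∀ f : (Fin n → ℝ) → ℝ, IntegrableOn f Q₀.set volume →
          (∀ lam ∈ Set.Ioo (-(n : ℝ)) 0,
            c₁ * campNorm Q₀ lam f ≤ GaRoLamNorm Q₀ lam f ∧
              GaRoLamNorm Q₀ lam f ≤ c₂ * campNorm Q₀ lam f) ∧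
          (c₁ * bmoNormE Q₀ f ≤ GaRoLamNorm Q₀ 0 f ∧
            GaRoLamNorm Q₀ 0 f ≤ c₂ * bmoNormE Q₀ f) := by
  refine ⟨1, 2, one_pos, ENNReal.ofNat_ne_top, fun Q₀ _ f hf => ?_⟩
  refine ⟨fun lam _ => ?_, ?_⟩
  · obtain ⟨h1, h2⟩ := main_estimate Q₀ f hf lam
    exact ⟨by rwa [one_mul], h2⟩
  · obtain ⟨h1, h2⟩ := main_estimate Q₀ f hf 0
    rw [camp_zero Q₀ f] at h1 h2
    exact ⟨by rwa [one_mul], h2⟩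

end
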